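/- Let A = {0, a_2, ..., a_n} with 0 < a_2 < ... < a_n, n ≥ 2, and gcd(a_2, ..., a_n) = 1. Then the following are equivalent: (i) |sA| = s(n-1) + 1 for all sufficiently large s; (ii) |sA| = s(n-1) + 1 for some s ≥ 2; (iii) A = {0, 1, ..., n-1}; (iv) |sA| = s(n-1) + 1 for all s ≥ 0. -/

import Mathlib

open Finset Pointwise

/-- The s-fold iterated sumset of a finite set of natural numbers; `sumset A 0 = {0}`. -/
def sumset (A : Finset ℕ) : ℕ → Finset ℕ
  | 0 => {0}
  | s + 1 => A + sumset A s

lemma sumset_succ (A : Finset ℕ) (s : ℕ) : sumset A (s + 1) = A + sumset A s := rfl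

lemma zero_mem_sumset (A : Finset ℕ) (h0 : 0 ∈ A) : ∀ s, 0 ∈ sumset A s
  | 0 => by simp [sumset]
  | s + 1 => by
    rw [sumset_succ]
    exact Finset.mem_add.2 ⟨0, h0, 0, zero_mem_sumset A h0 s, rfl⟩

lemma sumset_step (A : Finset ℕ) (h0 : 0 ∈ A) (hn : 2 ≤ A.card) (k : ℕ) :
    ∀ t, (sumset A k).card + t * (A.card - 1) ≤ (sumset A (k + t)).card
  | 0 => by simp
  | t + 1 => by
    have IH := sumset_step A h0 hn k t
    have hne : (sumset A (k + t)).Nonempty := ⟨0, zero_mem_sumset A h0 _⟩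
    have hA : A.Nonempty := ⟨0, h0⟩
    have CD : A.card + (sumset A (k + t)).card - 1 ≤ (A + sumset A (k + t)).card :=
      cauchy_davenport_add_of_linearOrder_isCancelAdd hA hne
    have : k + (t + 1) = (k + t) + 1 := rfl
    rw [this, sumset_succ, Nat.succ_mul]
    omega

lemma range_add_range (a b : ℕ) (ha : 1 ≤ a) (hb : 1 ≤ b) :
    range a + range b = range (a + b - 1) := by
  ext x
  simp only [Finset.mem_add, mem_range]
  constructor
  · rintro ⟨y, hy, z, hz, rfl⟩; omega
  · intro hx
    exact ⟨min x (a - 1), by omega, x - min x (a - 1), by omega, by omega⟩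

lemma sumset_range (n : ℕ) (hn : 1 ≤ n) : ∀ s, sumset (range n) s = range (s * (n - 1) + 1)
  | 0 => by simp [sumset]
  | s + 1 => by
    rw [sumset_succ, sumset_range n hn s, range_add_range n _ hn (by omega)]
    congr 1
    rw [Nat.succ_mul]
    omega

/-- The equality case: if `|A+A| = 2|A| - 1` then `A` is an interval. -/
lemma eq_range_of_card_two_add (A : Finset ℕ) (h0 : 0 ∈ A) (hn : 2 ≤ A.card)
    (hgcd : A.gcd id = 1) (h2 : (A + A).card = 2 * A.card - 1) : A = range A.card := by
  have hA : A.Nonempty := ⟨0, h0⟩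
  set m := A.max' hA with hm
  have hmem_le : ∀ x ∈ A, x ≤ m := fun x hx => le_max' A x hx
  have himg : (A.image (m + ·)).card = A.card :=
    card_image_of_injective _ (add_right_injective m)
  have hsub : A ∪ A.image (m + ·) ⊆ A + A := by
    intro x hx
    rcases mem_union.1 hx with hx | hx
    · exact Finset.mem_add.2 ⟨x, hx, 0, h0, add_zero x⟩
    · obtain ⟨a, ha, rfl⟩ := mem_image.1 hx
      exact Finset.mem_add.2 ⟨m, max'_mem A hA, a, ha, rfl⟩
  have hinter : A ∩ A.image (m + ·) = {m} := by
    ext x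
    simp only [mem_inter, mem_image, mem_singleton]
    constructor
    · rintro ⟨hxA, a, ha, rfl⟩
      have := hmem_le _ hxA
      omega
    · rintro rfl
      exact ⟨max'_mem A hA, 0, h0, add_zero m⟩
  have hucard : (A ∪ A.image (m + ·)).card = 2 * A.card - 1 := by
    have h' := card_union_add_card_inter A (A.image (m + ·))
    rw [hinter, himg, card_singleton] at h'
    omega
  have hequnion : A ∪ A.image (m + ·) = A + A :=
    eq_of_subset_of_card_le hsub (by rw [hucard, h2])
  -- the smallest nonzero element
  have hbne : (A.erase 0).Nonempty := by
    rw [← card_pos, card_erase_of_mem h0]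
    omega
  set b := (A.erase 0).min' hbne with hbdef
  have hbA : b ∈ A := mem_of_mem_erase (min'_mem _ hbne)
  have hb0 : b ≠ 0 := ne_of_mem_erase (min'_mem _ hbne)
  have hbmin : ∀ a ∈ A, a ≠ 0 → b ≤ a := fun a ha h => min'_le _ _ (mem_erase.2 ⟨h, ha⟩)
  have step : ∀ x ∈ A, x ≠ m → x + b ∈ A := by
    intro x hx hxm
    have hx2 : x + b ∈ A + A := Finset.mem_add.2 ⟨x, hx, b, hbA, rfl⟩
    rw [← hequnion] at hx2
    rcases mem_union.1 hx2 with h | h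
    · exact h
    · obtain ⟨a, ha, heq⟩ := mem_image.1 h
      have hxm' : x < m := lt_of_le_of_ne (hmem_le x hx) hxm
      have ha0 : a = 0 := by
        by_contra h0a
        have := hbmin a ha h0a
        omega
      have hxb : x + b = m := by omega
      rw [hxb]
      exact max'_mem A hA
  have key : ∀ k x, x ∈ A → m - x = k → b ∣ (m - x) := by
    intro k
    induction k using Nat.strong_induction_on with
    | _ k ih =>
      intro x hx hk
      rcases eq_or_ne x m with rfl | hne
      · simp
      · have hxb := step x hx hne
        have h1 : x < m := lt_of_le_of_ne (hmem_le x hx) hne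
        have h2' : x + b ≤ m := hmem_le _ hxb
        have hbpos : 0 < b := Nat.pos_of_ne_zero hb0
        obtain ⟨c, hc⟩ := ih (m - (x + b)) (by omega) (x + b) hxb rfl
        exact ⟨c + 1, by rw [Nat.mul_succ]; omega⟩
  have hdvd : ∀ x ∈ A, b ∣ x := by
    intro x hx
    have h1 : b ∣ m - x := key _ x hx rfl
    have h2' : b ∣ m := by simpa using key _ 0 h0 rfl
    have h3 : b ∣ m - (m - x) := Nat.dvd_sub h2' h1
    have := hmem_le x hx
    have : m - (m - x) = x := by omega
    rwa [this] at h3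
  have hb1 : b = 1 := by
    have : b ∣ A.gcd id := Finset.dvd_gcd fun x hx => hdvd x hx
    rw [hgcd] at this
    exact Nat.dvd_one.1 this
  have hall : ∀ x, x ≤ m → x ∈ A := by
    intro x
    induction x with
    | zero => intro _; exact h0
    | succ y ihy =>
      intro hle
      have hy : y ∈ A := ihy (by omega)
      have hym : y ≠ m := by omega
      have := step y hy hym
      rwa [hb1] at this
  have hrange : A = range (m + 1) := by
    ext x
    rw [mem_range]
    exact ⟨fun h => Nat.lt_succ_of_le (hmem_le x h), fun h => hall x (by omega)⟩
  have hcard2 : A.card = m + 1 := by rw [hrange, card_range]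
  rw [hcard2]
  exact hrange

theorem stmt4 (A : Finset ℕ) (h0 : 0 ∈ A) (hn : 2 ≤ A.card) (hgcd : A.gcd id = 1) :
    List.TFAE [
      (∃ s0 : ℕ, ∀ s ≥ s0, (sumset A s).card = s * (A.card - 1) + 1),
      (∃ s : ℕ, 2 ≤ s ∧ (sumset A s).card = s * (A.card - 1) + 1),
      A = Finset.range A.card,
      (∀ s : ℕ, (sumset A s).card = s * (A.card - 1) + 1)] := by
  tfae_have 1 → 2 := by
    rintro ⟨s0, h⟩
    exact ⟨max s0 2, le_max_right _ _, h _ (le_max_left _ _)⟩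
  tfae_have 2 → 3 := by
    rintro ⟨s, hs2, hs⟩
    -- lower bound for sumset A 2
    have l2 : 2 * (A.card - 1) + 1 ≤ (sumset A 2).card := by
      have h' := sumset_step A h0 hn 0 2
      have e : sumset A (0 + 2) = sumset A 2 := by norm_num
      have c0 : (sumset A 0).card = 1 := rfl
      rw [e, c0] at h'
      omega
    -- upper bound for sumset A 2
    have u2 : (sumset A 2).card ≤ 2 * (A.card - 1) + 1 := by
      have h' := sumset_step A h0 hn 2 (s - 2)
      have he : 2 + (s - 2) = s := by omega
      rw [he, hs] at h'
      have hmul : s * (A.card - 1) = (s - 2) * (A.card - 1) + 2 * (A.card - 1) := by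
        rw [← Nat.add_mul, Nat.sub_add_cancel hs2]
      omega
    have e2 : sumset A 2 = A + A := by
      show A + (A + ({0} : Finset ℕ)) = A + A
      congr 1
      ext x
      simp [Finset.mem_add]
    have h2 : (A + A).card = 2 * A.card - 1 := by
      rw [← e2]
      omega
    exact eq_range_of_card_two_add A h0 hn hgcd h2
  tfae_have 3 → 4 := by
    intro h3 s
    rw [h3, card_range, sumset_range A.card (by omega) s, card_range]
  tfae_have 4 → 1 := by
    intro h
    exact ⟨0, fun s _ => h s⟩
  tfae_finish
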